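/- Let ν ≠ 0 be real and x ≠ 0. Then the cubic polynomial f(λ) = λ³ + λ² − (ν² + x²)λ − ν² has three distinct real roots λ_K < λ_O < λ_I satisfying λ_K < −|ν|, −|ν| < λ_O < 0, and λ_I > |ν|. -/
import Mathlib


open Real

/-- Modified Bessel function of the first kind `I_ν(x)` (for `x > 0`),
defined by its standard power series. -/
noncomputable def besselI (ν x : ℝ) : ℝ :=
  ∑' k : ℕ, (x / 2) ^ (2 * k) / ((Nat.factorial k : ℝ) * Real.Gamma (k + ν + 1)) * (x / 2) ^ ν

/-- Modified Bessel function of the second kind `K_ν(x)` (for `x > 0`),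
defined by its standard integral representation. -/
noncomputable def besselK (ν x : ℝ) : ℝ :=
  ∫ t in Set.Ioi (0 : ℝ), Real.exp (-x * Real.cosh t) * Real.cosh (ν * t)

theorem cubic_three_roots (ν x : ℝ) (hν : ν ≠ 0) (hx : x ≠ 0) :
    ∃ lK lO lI : ℝ, lK < lO ∧ lO < lI ∧
      lK ^ 3 + lK ^ 2 - (ν ^ 2 + x ^ 2) * lK - ν ^ 2 = 0 ∧
      lO ^ 3 + lO ^ 2 - (ν ^ 2 + x ^ 2) * lO - ν ^ 2 = 0 ∧
      lI ^ 3 + lI ^ 2 - (ν ^ 2 + x ^ 2) * lI - ν ^ 2 = 0 ∧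
      lK < -|ν| ∧ -|ν| < lO ∧ lO < 0 ∧ |ν| < lI ∧
      ∀ l : ℝ, l ^ 3 + l ^ 2 - (ν ^ 2 + x ^ 2) * l - ν ^ 2 = 0 →
        l = lK ∨ l = lO ∨ l = lI := by
  set c : ℝ := ν ^ 2 + x ^ 2 with hcdef
  set a : ℝ := |ν| with hadef
  have ha : 0 < a := abs_pos.mpr hν
  have ha2 : a ^ 2 = ν ^ 2 := sq_abs ν
  have hx2 : 0 < x ^ 2 := by positivity
  have hac : a ^ 2 < c := by rw [ha2, hcdef]; linarith
  set f : ℝ → ℝ := fun t => t ^ 3 + t ^ 2 - c * t - ν ^ 2 with hfdef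
  have hcont : Continuous f := by fun_prop
  have hfa : 0 < f (-a) := by
    show 0 < (-a) ^ 3 + (-a) ^ 2 - c * (-a) - ν ^ 2
    nlinarith [mul_pos ha (sub_pos.mpr hac)]
  have hf0 : f 0 < 0 := by
    show (0:ℝ) ^ 3 + (0:ℝ) ^ 2 - c * 0 - ν ^ 2 < 0
    nlinarith
  have hfpa : f a < 0 := by
    show a ^ 3 + a ^ 2 - c * a - ν ^ 2 < 0
    nlinarith [mul_pos ha (sub_pos.mpr hac)]
  set M : ℝ := -(2 + c) with hMdef
  have hca : (0:ℝ) < c := lt_of_le_of_lt (by positivity) hac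
  have hMa : M < -a := by
    rw [hMdef]
    nlinarith [sq_nonneg (a - 1)]
  have hfM : f M < 0 := by
    show M ^ 3 + M ^ 2 - c * M - ν ^ 2 < 0
    rw [hMdef]
    nlinarith [sq_nonneg ν, sq_nonneg c, ha2]
  set N : ℝ := 1 + a + c with hNdef
  have haN : a < N := by rw [hNdef]; linarith
  have hfN : 0 < f N := by
    show 0 < N ^ 3 + N ^ 2 - c * N - ν ^ 2
    rw [hNdef]
    nlinarith [ha2, mul_pos ha hca, sq_nonneg a]
  obtain ⟨lK, hlKm, hlKf⟩ :=
    intermediate_value_Ioo (le_of_lt hMa) hcont.continuousOn ⟨hfM, hfa⟩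
  obtain ⟨lO, hlOm, hlOf⟩ :=
    intermediate_value_Ioo' (by linarith : -a ≤ (0:ℝ)) hcont.continuousOn ⟨hf0, hfa⟩
  obtain ⟨lI, hlIm, hlIf⟩ :=
    intermediate_value_Ioo (le_of_lt haN) hcont.continuousOn ⟨hfpa, hfN⟩
  have eK : lK ^ 3 + lK ^ 2 - c * lK - ν ^ 2 = 0 := hlKf
  have eO : lO ^ 3 + lO ^ 2 - c * lO - ν ^ 2 = 0 := hlOf
  have eI : lI ^ 3 + lI ^ 2 - c * lI - ν ^ 2 = 0 := hlIf
  have hKO : lK < lO := lt_trans hlKm.2 hlOm.1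
  refine ⟨lK, lO, lI, hKO, ?_, eK, eO, eI, hlKm.2, hlOm.1, hlOm.2, hlIm.1, ?_⟩
  · exact lt_trans hlOm.2 (lt_trans ha hlIm.1)
  · have hOI : lO < lI := lt_trans hlOm.2 (lt_trans ha hlIm.1)
    have d1 : lK ^ 2 + lK * lO + lO ^ 2 + lK + lO - c = 0 := by
      have h : (lK - lO) * (lK ^ 2 + lK * lO + lO ^ 2 + lK + lO - c) = 0 := by
        linear_combination eK - eO
      exact (mul_eq_zero.mp h).resolve_left (sub_ne_zero.mpr hKO.ne)
    have d2 : lK ^ 2 + lK * lI + lI ^ 2 + lK + lI - c = 0 := by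
      have h : (lK - lI) * (lK ^ 2 + lK * lI + lI ^ 2 + lK + lI - c) = 0 := by
        linear_combination eK - eI
      exact (mul_eq_zero.mp h).resolve_left (sub_ne_zero.mpr (hKO.trans hOI).ne)
    have s1 : lK + lO + lI = -1 := by
      have h : (lO - lI) * (lK + lO + lI + 1) = 0 := by
        linear_combination d1 - d2
      have h2 := (mul_eq_zero.mp h).resolve_left (sub_ne_zero.mpr hOI.ne)
      linarith
    have e2 : lK * lO + lK * lI + lO * lI = -c := by
      linear_combination -d1 + (lK + lO) * s1
    have e3 : lK * lO * lI = ν ^ 2 := by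
      linear_combination eK + lK * e2 - lK ^ 2 * s1
    intro l hl
    have hprod : (l - lK) * ((l - lO) * (l - lI)) = 0 := by
      linear_combination hl - l ^ 2 * s1 + l * e2 - e3
    rcases mul_eq_zero.mp hprod with h | h
    · exact Or.inl (sub_eq_zero.mp h)
    · rcases mul_eq_zero.mp h with h' | h'
      · exact Or.inr (Or.inl (sub_eq_zero.mp h'))
      · exact Or.inr (Or.inr (sub_eq_zero.mp h'))
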